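/- For Im τ > 0, η(τ) = ∑_{n∈ℤ} e^{πin} e^{3πi(n+1/6)²τ}, where η(τ) = e^{πiτ/12} ∏_{n=1}^∞ (1 - e^{2πinτ}). -/

import Mathlib

open Complex Real

section EtaAuxSection
open Finset

open Finset
namespace EtaAux

def rr (S : Finset ℕ) (h : S.Nonempty) : ℕ :=
  Nat.find (p := fun r => Finset.Icc r (S.max' h) ⊆ S)
    ⟨S.max' h, by simp [Finset.max'_mem S h]⟩

lemma rr_subset (S : Finset ℕ) (h : S.Nonempty) : Finset.Icc (rr S h) (S.max' h) ⊆ S :=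
  Nat.find_spec (p := fun r => Finset.Icc r (S.max' h) ⊆ S) ⟨S.max' h, by simp [Finset.max'_mem S h]⟩

lemma rr_le_of (S : Finset ℕ) (h : S.Nonempty) {r : ℕ} (hr : Finset.Icc r (S.max' h) ⊆ S) :
    rr S h ≤ r := Nat.find_le hr

def Pset (S₀ : Finset ℕ) (m M : ℕ) : Finset ℕ :=
  insert m (S₀ ∪ Finset.Icc (M + 1 - m) M)

def Qset (S₀ : Finset ℕ) (m M : ℕ) : Finset ℕ :=
  S₀ ∪ Finset.Icc (M + 2 - m) (M + 1)

structure Hyp (S₀ : Finset ℕ) (m M : ℕ) : Prop where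
  hm : 1 ≤ m
  hM : 2 * m ≤ M
  hS₀ : ∀ x ∈ S₀, m < x ∧ x ≤ M - m

def Amove (S : Finset ℕ) (h : S.Nonempty) : Finset ℕ :=
  ((S.erase (S.min' h)) \ Finset.Icc (S.max' h + 1 - S.min' h) (S.max' h)) ∪
    Finset.Icc (S.max' h + 2 - S.min' h) (S.max' h + 1)

def Bmove (S : Finset ℕ) (h : S.Nonempty) : Finset ℕ :=
  insert (S.max' h + 1 - rr S h)
    ((S \ Finset.Icc (rr S h) (S.max' h)) ∪ Finset.Icc (rr S h - 1) (S.max' h - 1))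

def Fr (S : Finset ℕ) : Finset ℕ :=
  if h : S.Nonempty then
    (if S.min' h + rr S h ≤ S.max' h + 1 then Amove S h else Bmove S h)
  else ∅

variable {S₀ : Finset ℕ} {m M : ℕ}

lemma mem_Pset (H : Hyp S₀ m M) {x : ℕ} :
    x ∈ Pset S₀ m M ↔ x = m ∨ x ∈ S₀ ∨ (M + 1 - m ≤ x ∧ x ≤ M) := by
  simp [Pset, Finset.mem_Icc]

lemma mem_Qset (H : Hyp S₀ m M) {x : ℕ} :
    x ∈ Qset S₀ m M ↔ x ∈ S₀ ∨ (M + 2 - m ≤ x ∧ x ≤ M + 1) := by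
  simp [Qset, Finset.mem_Icc]

lemma Pset_nonempty : (Pset S₀ m M).Nonempty := ⟨m, Finset.mem_insert_self _ _⟩

lemma Qset_nonempty (H : Hyp S₀ m M) : (Qset S₀ m M).Nonempty :=
  ⟨M + 1, by have := H.hm; have := H.hM; rw [mem_Qset H]; right; omega⟩

lemma Pset_max (H : Hyp S₀ m M) : (Pset S₀ m M).max' Pset_nonempty = M := by
  have := H.hm; have := H.hM
  apply le_antisymm
  · apply Finset.max'_le
    intro x hx
    rw [mem_Pset H] at hx
    rcases hx with h | h | h
    · omega
    · have := H.hS₀ x h; omega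
    · omega
  · apply Finset.le_max'
    rw [mem_Pset H]
    right; right; omega

lemma Pset_min (H : Hyp S₀ m M) : (Pset S₀ m M).min' Pset_nonempty = m := by
  have := H.hm; have := H.hM
  apply le_antisymm
  · exact Finset.min'_le _ _ (by rw [mem_Pset H]; left; rfl)
  · apply Finset.le_min'
    intro x hx
    rw [mem_Pset H] at hx
    rcases hx with h | h | h
    · omega
    · have := H.hS₀ x h; omega
    · omega

lemma Qset_max (H : Hyp S₀ m M) : (Qset S₀ m M).max' (Qset_nonempty H) = M + 1 := by
  have := H.hm; have := H.hM
  apply le_antisymm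
  · apply Finset.max'_le
    intro x hx
    rw [mem_Qset H] at hx
    rcases hx with h | h
    · have := H.hS₀ x h; omega
    · omega
  · apply Finset.le_max'
    rw [mem_Qset H]; right; omega

lemma Qset_min_gt (H : Hyp S₀ m M) : m < (Qset S₀ m M).min' (Qset_nonempty H) := by
  have := H.hm; have := H.hM
  rw [Finset.lt_min'_iff]
  intro x hx
  rw [mem_Qset H] at hx
  rcases hx with h | h
  · exact (H.hS₀ x h).1
  · omega

lemma rr_Pset_le (H : Hyp S₀ m M) : rr (Pset S₀ m M) Pset_nonempty ≤ M + 1 - m := by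
  apply rr_le_of
  rw [Pset_max H]
  intro x hx
  rw [mem_Pset H]
  rw [Finset.mem_Icc] at hx
  right; right; exact hx

lemma rr_Qset (H : Hyp S₀ m M) : rr (Qset S₀ m M) (Qset_nonempty H) = M + 2 - m := by
  have hle : rr (Qset S₀ m M) (Qset_nonempty H) ≤ M + 2 - m := by
    apply rr_le_of
    rw [Qset_max H]
    intro x hx
    rw [mem_Qset H]
    rw [Finset.mem_Icc] at hx
    right; exact hx
  rcases Nat.lt_or_ge (rr (Qset S₀ m M) (Qset_nonempty H)) (M + 2 - m) with hlt | hge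
  · exfalso
    have hmem : M + 1 - m ∈ Finset.Icc (rr (Qset S₀ m M) (Qset_nonempty H)) ((Qset S₀ m M).max' (Qset_nonempty H)) := by
      rw [Qset_max H, Finset.mem_Icc]
      constructor <;> omega
    have := rr_subset _ (Qset_nonempty H) hmem
    rw [mem_Qset H] at this
    rcases this with h | h
    · have := H.hS₀ _ h; have := H.hm; have := H.hM; omega
    · have := H.hm; omega
  · omega

theorem Fr_Pset (H : Hyp S₀ m M) : Fr (Pset S₀ m M) = Qset S₀ m M := by
  have hne : (Pset S₀ m M).Nonempty := Pset_nonempty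
  rw [Fr, dif_pos hne]
  have hmin := Pset_min H
  have hmax := Pset_max H
  have hrr := rr_Pset_le H
  have hcond : (Pset S₀ m M).min' hne + rr _ hne ≤ (Pset S₀ m M).max' hne + 1 := by
    rw [hmin, hmax]
    have := H.hm; have := H.hM; omega
  rw [if_pos hcond]
  rw [Amove, hmin, hmax]
  ext x
  simp only [Finset.mem_union, Finset.mem_sdiff, Finset.mem_erase, Finset.mem_Icc, mem_Pset H,
    mem_Qset H]
  by_cases hx : x ∈ S₀
  · have := H.hS₀ x hx
    have := H.hm; have := H.hM
    constructor
    · intro _; left; exact hx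
    · intro _; left; exact ⟨⟨by omega, Or.inr (Or.inl hx)⟩, by omega⟩
  · have := H.hm; have := H.hM
    constructor
    · rintro (⟨⟨hne', (h | h | h)⟩, hni⟩ | h)
      · omega
      · exact absurd h hx
      · omega
      · right; omega
    · rintro (h | h)
      · exact absurd h hx
      · right; omega

theorem Fr_Qset (H : Hyp S₀ m M) : Fr (Qset S₀ m M) = Pset S₀ m M := by
  have hne : (Qset S₀ m M).Nonempty := Qset_nonempty H
  rw [Fr, dif_pos hne]
  have hmin := Qset_min_gt H
  have hmax := Qset_max H
  have hrr := rr_Qset H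
  have hm := H.hm; have hM := H.hM
  have hcond : ¬ ((Qset S₀ m M).min' hne + rr _ hne ≤ (Qset S₀ m M).max' hne + 1) := by
    rw [hmax, hrr]; omega
  rw [if_neg hcond]
  rw [Bmove, hmax, hrr]
  ext x
  simp only [Finset.mem_insert, Finset.mem_union, Finset.mem_sdiff, Finset.mem_Icc, mem_Pset H,
    mem_Qset H]
  by_cases hx : x ∈ S₀
  · have := H.hS₀ x hx
    constructor
    · intro _; right; left; exact hx
    · intro _; right; left; exact ⟨Or.inl hx, by omega⟩
  · constructor
    · rintro (h | ⟨(h | h), hni⟩ | h)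
      · left; omega
      · exact absurd h hx
      · omega
      · right; right; omega
    · rintro (h | h | h)
      · left; omega
      · exact absurd h hx
      · right; right; omega


def Pent (T : Finset ℕ) : Prop :=
  T = ∅ ∨ (∃ a, 1 ≤ a ∧ T = Finset.Icc a (2 * a - 1)) ∨ (∃ a, 2 ≤ a ∧ T = Finset.Icc a (2 * a - 2))

lemma min'_mem_le_max {S : Finset ℕ} (h : S.Nonempty) {x : ℕ} (hx : x ∈ S) :
    S.min' h ≤ x ∧ x ≤ S.max' h := ⟨S.min'_le _ hx, S.le_max' _ hx⟩

lemma rr_le_max (S : Finset ℕ) (h : S.Nonempty) : rr S h ≤ S.max' h :=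
  rr_le_of S h (by simp [Finset.max'_mem S h])

lemma min_le_rr (S : Finset ℕ) (h : S.Nonempty) : S.min' h ≤ rr S h :=
  S.min'_le _ (rr_subset S h (by simp [rr_le_max S h]))

lemma rr_pred_not_mem (S : Finset ℕ) (h : S.Nonempty) (h1 : 1 ≤ rr S h) :
    rr S h - 1 ∉ S := by
  intro hm
  have hsub : Finset.Icc (rr S h - 1) (S.max' h) ⊆ S := by
    intro x hx
    rcases Finset.mem_Icc.mp hx with ⟨hx1, hx2⟩
    rcases eq_or_lt_of_le hx1 with hE | hL
    · simpa [← hE] using hm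
    · exact rr_subset S h (Finset.mem_Icc.mpr ⟨by omega, hx2⟩)
  have := rr_le_of S h hsub
  omega

lemma rr_pos (S : Finset ℕ) (h : S.Nonempty) (h0 : 0 ∉ S) : 1 ≤ rr S h := by
  by_contra hc
  push_neg at hc
  have h1 : rr S h = 0 := by omega
  refine h0 (rr_subset S h ?_)
  rw [h1]
  exact Finset.mem_Icc.mpr ⟨Nat.zero_le _, Nat.zero_le _⟩

lemma min_pos {S : Finset ℕ} (h : S.Nonempty) (h0 : 0 ∉ S) : 1 ≤ S.min' h := by
  rcases Nat.eq_zero_or_pos (S.min' h) with hz | hp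
  · exact absurd (hz ▸ S.min'_mem h) h0
  · exact hp

theorem classify {S : Finset ℕ} (h : S.Nonempty) (h0 : 0 ∉ S) (hp : ¬ Pent S) :
    (∃ S₀ m M, Hyp S₀ m M ∧ S = Pset S₀ m M) ∨ (∃ S₀ m M, Hyp S₀ m M ∧ S = Qset S₀ m M) := by
  set m := S.min' h with hm_def
  set M := S.max' h with hM_def
  set r := rr S h with hr_def
  have hm1 : 1 ≤ m := min_pos h h0
  have hr1 : 1 ≤ r := rr_pos S h h0
  have hrM : r ≤ M := rr_le_max S h
  have hmr : m ≤ r := min_le_rr S h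
  have hrsub : Finset.Icc r M ⊆ S := rr_subset S h
  have hrpred : r - 1 ∉ S := rr_pred_not_mem S h hr1
  have hbound : ∀ x ∈ S, m ≤ x ∧ x ≤ M := fun x hx => min'_mem_le_max h hx
  by_cases hA : m + r ≤ M + 1
  · -- case A
    left
    have h2m : 2 * m ≤ M := by
      by_contra hc
      push_neg at hc
      have hrm : r = m ∧ M + 1 = 2 * m := by
        constructor <;> omega
      have hSeq : S = Finset.Icc m (2 * m - 1) := by
        apply Finset.Subset.antisymm
        · intro x hx
          have := hbound x hx
          rw [Finset.mem_Icc]; omega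
        · intro x hx
          apply hrsub
          rw [Finset.mem_Icc] at *
          omega
      exact hp (Or.inr (Or.inl ⟨m, hm1, hSeq⟩))
    refine ⟨(S.erase m) \ Finset.Icc (M + 1 - m) M, m, M, ⟨hm1, h2m, ?_⟩, ?_⟩
    · intro x hx
      simp only [Finset.mem_sdiff, Finset.mem_erase, Finset.mem_Icc] at hx
      obtain ⟨⟨hxm, hxS⟩, hxI⟩ := hx
      have := hbound x hxS
      omega
    · ext x
      rw [mem_Pset ⟨hm1, h2m, by
        intro y hy
        simp only [Finset.mem_sdiff, Finset.mem_erase, Finset.mem_Icc] at hy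
        obtain ⟨⟨hym, hyS⟩, hyI⟩ := hy
        have := hbound y hyS
        omega⟩]
      simp only [Finset.mem_sdiff, Finset.mem_erase, Finset.mem_Icc]
      constructor
      · intro hx
        have := hbound x hx
        by_cases h1 : x = m
        · left; exact h1
        · by_cases h2 : M + 1 - m ≤ x ∧ x ≤ M
          · right; right; exact h2
          · right; left; exact ⟨⟨h1, hx⟩, h2⟩
      · rintro (h1 | h1 | h1)
        · rw [h1]; exact S.min'_mem h
        · exact h1.1.2
        · apply hrsub; rw [Finset.mem_Icc]; omega
  · -- case B
    right
    push_neg at hA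
    have hm2 : 2 ≤ m := by
      -- m > t = M + 1 - r ≥ 1
      omega
    have htr : M + 3 ≤ 2 * r := by
      -- first, t ≤ r - 1
      have ht1 : M + 1 - r ≤ r - 1 := by
        by_contra hc
        push_neg at hc
        -- t ≥ r, so t ∈ Icc r M ⊆ S, but t < m
        have htmem : M + 1 - r ∈ S := by
          apply hrsub; rw [Finset.mem_Icc]; omega
        have := hbound _ htmem
        omega
      -- second, t ≠ r - 1
      by_contra hc
      push_neg at hc
      have hteq : M + 1 - r = r - 1 := by omega
      have hrm : m = r := by omega
      have hSeq : S = Finset.Icc m (2 * m - 2) := by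
        apply Finset.Subset.antisymm
        · intro x hx
          have hb := hbound x hx
          rw [Finset.mem_Icc]
          omega
        · intro x hx
          apply hrsub
          rw [Finset.mem_Icc] at *
          omega
      exact hp (Or.inr (Or.inr ⟨m, hm2, hSeq⟩))
    have hHyp : Hyp (S \ Finset.Icc r M) (M + 1 - r) (M - 1) := by
      refine ⟨by omega, by omega, ?_⟩
      intro x hx
      simp only [Finset.mem_sdiff, Finset.mem_Icc] at hx
      obtain ⟨hxS, hxI⟩ := hx
      have := hbound x hxS
      have hxr : x ≠ r - 1 := fun hxe => hrpred (hxe ▸ hxS)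
      omega
    refine ⟨S \ Finset.Icc r M, M + 1 - r, M - 1, hHyp, ?_⟩
    ext x
    rw [mem_Qset hHyp]
    simp only [Finset.mem_sdiff, Finset.mem_Icc]
    constructor
    · intro hx
      have := hbound x hx
      by_cases h2 : r ≤ x ∧ x ≤ M
      · right; omega
      · left; exact ⟨hx, h2⟩
    · rintro (h1 | h1)
      · exact h1.1
      · apply hrsub; rw [Finset.mem_Icc]; omega

theorem not_pent_Pset (H : Hyp S₀ m M) : ¬ Pent (Pset S₀ m M) := by
  have hm := H.hm; have hM := H.hM
  have hmmem : m ∈ Pset S₀ m M := by rw [mem_Pset H]; left; rfl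
  have hMmem : M ∈ Pset S₀ m M := by rw [mem_Pset H]; right; right; omega
  rintro (h | ⟨a, ha, h⟩ | ⟨a, ha, h⟩)
  · rw [h] at hmmem; simp at hmmem
  · rw [h, Finset.mem_Icc] at hmmem hMmem
    omega
  · rw [h, Finset.mem_Icc] at hmmem hMmem
    omega

theorem not_pent_Qset (H : Hyp S₀ m M) : ¬ Pent (Qset S₀ m M) := by
  have hm := H.hm; have hM := H.hM
  have h1mem : M + 1 ∈ Qset S₀ m M := by rw [mem_Qset H]; right; omega
  have h2mem : M + 2 - m ∈ Qset S₀ m M := by rw [mem_Qset H]; right; omega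
  have hgap : M + 1 - m ∉ Qset S₀ m M := by
    rw [mem_Qset H]
    rintro (h | h)
    · have := H.hS₀ _ h; omega
    · omega
  rintro (h | ⟨a, ha, h⟩ | ⟨a, ha, h⟩)
  · rw [h] at h1mem; simp at h1mem
  · rw [h, Finset.mem_Icc] at h1mem h2mem
    have hble : 2 * a - 1 ≤ M + 1 := by
      have hb : 2 * a - 1 ∈ Qset S₀ m M := by rw [h, Finset.mem_Icc]; omega
      rw [mem_Qset H] at hb
      rcases hb with hb | hb
      · have := H.hS₀ _ hb; omega
      · omega
    rcases Nat.lt_or_ge (M + 1 - m) a with hlt | hge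
    · omega
    · exact hgap (by rw [h, Finset.mem_Icc]; omega)
  · rw [h, Finset.mem_Icc] at h1mem h2mem
    have hble : 2 * a - 2 ≤ M + 1 := by
      have hb : 2 * a - 2 ∈ Qset S₀ m M := by rw [h, Finset.mem_Icc]; omega
      rw [mem_Qset H] at hb
      rcases hb with hb | hb
      · have := H.hS₀ _ hb; omega
      · omega
    rcases Nat.lt_or_ge (M + 1 - m) a with hlt | hge
    · omega
    · exact hgap (by rw [h, Finset.mem_Icc]; omega)

theorem zero_not_mem_Pset (H : Hyp S₀ m M) : 0 ∉ Pset S₀ m M := by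
  have hm := H.hm; have hM := H.hM
  rw [mem_Pset H]
  rintro (h | h | h)
  · omega
  · have := H.hS₀ _ h; omega
  · omega

theorem zero_not_mem_Qset (H : Hyp S₀ m M) : 0 ∉ Qset S₀ m M := by
  have hm := H.hm; have hM := H.hM
  rw [mem_Qset H]
  rintro (h | h)
  · have := H.hS₀ _ h; omega
  · omega

theorem card_Pset (H : Hyp S₀ m M) :
    (Pset S₀ m M).card = (Qset S₀ m M).card + 1 := by
  have hm := H.hm; have hM := H.hM
  have hd1 : Disjoint S₀ (Finset.Icc (M + 1 - m) M) := by
    rw [Finset.disjoint_left]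
    intro x hx hxI
    have := H.hS₀ _ hx
    rw [Finset.mem_Icc] at hxI
    omega
  have hd2 : Disjoint S₀ (Finset.Icc (M + 2 - m) (M + 1)) := by
    rw [Finset.disjoint_left]
    intro x hx hxI
    have := H.hS₀ _ hx
    rw [Finset.mem_Icc] at hxI
    omega
  have hni : m ∉ S₀ ∪ Finset.Icc (M + 1 - m) M := by
    rw [Finset.mem_union, Finset.mem_Icc]
    rintro (h | h)
    · have := H.hS₀ _ h; omega
    · omega
  rw [Pset, Qset, Finset.card_insert_of_notMem hni, Finset.card_union_of_disjoint hd1,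
    Finset.card_union_of_disjoint hd2, Nat.card_Icc, Nat.card_Icc]
  omega

theorem sum_Pset (H : Hyp S₀ m M) :
    (Pset S₀ m M).sum id = (Qset S₀ m M).sum id := by
  have hm := H.hm; have hM := H.hM
  have hd1 : Disjoint S₀ (Finset.Icc (M + 1 - m) M) := by
    rw [Finset.disjoint_left]
    intro x hx hxI
    have := H.hS₀ _ hx
    rw [Finset.mem_Icc] at hxI
    omega
  have hd2 : Disjoint S₀ (Finset.Icc (M + 2 - m) (M + 1)) := by
    rw [Finset.disjoint_left]
    intro x hx hxI
    have := H.hS₀ _ hx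
    rw [Finset.mem_Icc] at hxI
    omega
  have hni : m ∉ S₀ ∪ Finset.Icc (M + 1 - m) M := by
    rw [Finset.mem_union, Finset.mem_Icc]
    rintro (h | h)
    · have := H.hS₀ _ h; omega
    · omega
  have hshift : Finset.Icc (M + 2 - m) (M + 1) = Finset.image (· + 1) (Finset.Icc (M + 1 - m) M) := by
    ext x
    simp only [Finset.mem_Icc, Finset.mem_image]
    constructor
    · intro hx; exact ⟨x - 1, by omega, by omega⟩
    · rintro ⟨y, hy, rfl⟩; omega
  rw [Pset, Qset, Finset.sum_insert hni, Finset.sum_union hd1, Finset.sum_union hd2, hshift,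
    Finset.sum_image (by intro a _ b _ hab; simp only at hab; omega)]
  have : ∑ x ∈ Finset.Icc (M + 1 - m) M, id (x + 1)
      = (∑ x ∈ Finset.Icc (M + 1 - m) M, id x) + (Finset.Icc (M + 1 - m) M).card := by
    rw [Finset.card_eq_sum_ones]
    rw [← Finset.sum_add_distrib]
    rfl
  rw [this, Nat.card_Icc]
  simp only [id_eq]
  omega


def pentFinset (j : ℤ) : Finset ℕ :=
  if j = 0 then ∅
  else if 0 < j then Finset.Icc (j.toNat + 1) (2 * j.toNat)
  else Finset.Icc (-j).toNat (2 * (-j).toNat - 1)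

lemma pent_iff (T : Finset ℕ) : Pent T ↔ ∃ j, T = pentFinset j := by
  constructor
  · rintro (h | ⟨a, ha, h⟩ | ⟨a, ha, h⟩)
    · exact ⟨0, by simp [pentFinset, h]⟩
    · refine ⟨-(a : ℤ), ?_⟩
      rw [pentFinset, if_neg (by omega), if_neg (by omega)]
      simp only [neg_neg, Int.toNat_natCast]
      exact h
    · refine ⟨(a : ℤ) - 1, ?_⟩
      rw [pentFinset, if_neg (by omega), if_pos (by omega)]
      have h1 : ((a : ℤ) - 1).toNat = a - 1 := by omega
      rw [h1, h]
      congr 1 <;> omega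
  · rintro ⟨j, rfl⟩
    rcases lt_trichotomy j 0 with hj | hj | hj
    · right; left
      refine ⟨(-j).toNat, by omega, ?_⟩
      rw [pentFinset, if_neg (by omega), if_neg (by omega)]
    · left; simp [pentFinset, hj]
    · right; right
      refine ⟨j.toNat + 1, by omega, ?_⟩
      rw [pentFinset, if_neg (by omega), if_pos hj]
      have h2 : 2 * (j.toNat + 1) - 2 = 2 * j.toNat := by omega
      rw [h2]

lemma zero_not_mem_pentFinset (j : ℤ) : 0 ∉ pentFinset j := by
  rcases lt_trichotomy j 0 with hj | hj | hj
  · rw [pentFinset, if_neg (by omega), if_neg (by omega)]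
    rw [Finset.mem_Icc]
    omega
  · simp [pentFinset, hj]
  · rw [pentFinset, if_neg (by omega), if_pos hj]
    rw [Finset.mem_Icc]
    omega

lemma card_pentFinset (j : ℤ) : (pentFinset j).card = j.natAbs := by
  rcases lt_trichotomy j 0 with hj | hj | hj
  · rw [pentFinset, if_neg (by omega), if_neg (by omega), Nat.card_Icc]
    omega
  · simp [pentFinset, hj]
  · rw [pentFinset, if_neg (by omega), if_pos hj, Nat.card_Icc]
    omega

lemma pentFinset_injective : Function.Injective pentFinset := by
  intro a b hab
  have h0 : ∀ j : ℤ, j ≠ 0 → (pentFinset j).Nonempty := by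
    intro j hj
    rcases lt_trichotomy j 0 with h | h | h
    · rw [pentFinset, if_neg hj, if_neg (by omega)]
      rw [Finset.nonempty_Icc]
      omega
    · omega
    · rw [pentFinset, if_neg hj, if_pos h]
      rw [Finset.nonempty_Icc]
      omega
  by_cases ha : a = 0
  · by_cases hb : b = 0
    · rw [ha, hb]
    · exfalso
      rw [ha] at hab
      have := h0 b hb
      rw [← hab] at this
      simp [pentFinset] at this
  · by_cases hb : b = 0
    · exfalso
      rw [hb] at hab
      have := h0 a ha
      rw [hab] at this
      simp [pentFinset] at this
    · -- both nonzero; compare min and max of the Icc's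
      have hmin : ∀ j : ℤ, j ≠ 0 → ∃ u v : ℕ, pentFinset j = Finset.Icc u v ∧ u ≤ v ∧
          ((0 < j ∧ u = j.toNat + 1 ∧ v = 2 * j.toNat) ∨
           (j < 0 ∧ u = (-j).toNat ∧ v = 2 * (-j).toNat - 1)) := by
        intro j hj
        rcases lt_trichotomy j 0 with h | h | h
        · exact ⟨(-j).toNat, 2 * (-j).toNat - 1,
            by rw [pentFinset, if_neg hj, if_neg (by omega)], by omega, Or.inr ⟨h, rfl, rfl⟩⟩
        · omega
        · exact ⟨j.toNat + 1, 2 * j.toNat,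
            by rw [pentFinset, if_neg hj, if_pos h], by omega, Or.inl ⟨h, rfl, rfl⟩⟩
      obtain ⟨u1, v1, he1, huv1, hc1⟩ := hmin a ha
      obtain ⟨u2, v2, he2, huv2, hc2⟩ := hmin b hb
      rw [he1, he2] at hab
      have hu1 : u1 ∈ Finset.Icc u2 v2 := by rw [← hab, Finset.mem_Icc]; omega
      have hu2 : u2 ∈ Finset.Icc u1 v1 := by rw [hab, Finset.mem_Icc]; omega
      have hv1 : v1 ∈ Finset.Icc u2 v2 := by rw [← hab, Finset.mem_Icc]; omega
      have hv2 : v2 ∈ Finset.Icc u1 v1 := by rw [hab, Finset.mem_Icc]; omega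
      rw [Finset.mem_Icc] at hu1 hu2 hv1 hv2
      rcases hc1 with ⟨hj1, hu1e, hv1e⟩ | ⟨hj1, hu1e, hv1e⟩ <;>
        rcases hc2 with ⟨hj2, hu2e, hv2e⟩ | ⟨hj2, hu2e, hv2e⟩ <;> omega


lemma gaussZ (n : ℕ) : ((∑ i ∈ Finset.range n, i : ℕ) : ℤ) * 2 = n * n - n := by
  induction n with
  | zero => simp
  | succ k ih =>
    rw [Finset.sum_range_succ]
    push_cast
    push_cast at ih
    ring_nf
    ring_nf at ih
    linarith

lemma sum_Icc_castZ (a b : ℕ) (h : a ≤ b + 1) :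
    ((∑ x ∈ Finset.Icc a b, x : ℕ) : ℤ) * 2 = ((a : ℤ) + b) * ((b : ℤ) + 1 - a) := by
  have hsplit : Finset.range (b + 1) = Finset.range a ∪ Finset.Icc a b := by
    ext x
    simp only [Finset.mem_range, Finset.mem_union, Finset.mem_Icc]
    omega
  have hdisj : Disjoint (Finset.range a) (Finset.Icc a b) := by
    rw [Finset.disjoint_left]
    intro x hx hx'
    rw [Finset.mem_range] at hx
    rw [Finset.mem_Icc] at hx'
    omega
  have e3 : (∑ i ∈ Finset.range (b + 1), i) = (∑ i ∈ Finset.range a, i) + ∑ x ∈ Finset.Icc a b, x := by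
    rw [hsplit, Finset.sum_union hdisj]
  have e1 := gaussZ (b + 1)
  have e2 := gaussZ a
  have e3' : ((∑ i ∈ Finset.range (b + 1), i : ℕ) : ℤ)
      = ((∑ i ∈ Finset.range a, i : ℕ) : ℤ) + ((∑ x ∈ Finset.Icc a b, x : ℕ) : ℤ) := by
    exact_mod_cast congrArg (Nat.cast : ℕ → ℤ) e3
  rw [Nat.cast_add, Nat.cast_one] at e1
  linear_combination e1 - e2 - 2 * e3'

lemma sum_pentFinset (j : ℤ) : (((pentFinset j).sum id : ℕ) : ℤ) * 2 = 3 * j ^ 2 + j := by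
  rcases lt_trichotomy j 0 with hj | hj | hj
  · set k := (-j).toNat with hk
    have hk1 : 1 ≤ k := by omega
    have hjk : j = -(k : ℤ) := by omega
    rw [pentFinset, if_neg (by omega), if_neg (by omega)]
    have hsum := sum_Icc_castZ k (2 * k - 1) (by omega)
    simp only [id_eq]
    have hcast : ((2 * k - 1 : ℕ) : ℤ) = 2 * (k : ℤ) - 1 := by omega
    rw [hcast] at hsum
    rw [hjk]
    simp only [neg_neg, Int.toNat_natCast]
    nlinarith [hsum]
  · simp [pentFinset, hj]
  · set k := j.toNat with hk
    have hk1 : 1 ≤ k := by omega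
    have hjk : j = (k : ℤ) := by omega
    rw [pentFinset, if_neg (by omega), if_pos hj]
    have hsum := sum_Icc_castZ (k + 1) (2 * k) (by omega)
    simp only [id_eq]
    rw [Nat.cast_add, Nat.cast_one, Nat.cast_mul, Nat.cast_ofNat] at hsum
    rw [hjk]
    simp only [Int.toNat_natCast]
    nlinarith [hsum]



/-- summability of `r ^ (sum of T)` over all finsets -/
lemma summable_pow_sum {r : ℝ} (h0 : 0 ≤ r) (h1 : r < 1) :
    Summable (fun T : Finset ℕ => r ^ (T.sum id)) := by
  apply summable_of_sum_le (c := Real.exp (1 - r)⁻¹) (fun T => pow_nonneg h0 _)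
  intro A
  set N := (A.sup fun T => T.sup id) + 1 with hN
  have hsub : A ⊆ (Finset.range N).powerset := by
    intro T hT
    rw [Finset.mem_powerset]
    intro x hx
    rw [Finset.mem_range]
    have h1' : x ≤ T.sup id := Finset.le_sup (f := id) hx
    have h2' : T.sup id ≤ A.sup fun T => T.sup id := Finset.le_sup (f := fun T => T.sup id) hT
    omega
  calc ∑ T ∈ A, r ^ (T.sum id)
      ≤ ∑ T ∈ (Finset.range N).powerset, r ^ (T.sum id) :=
        Finset.sum_le_sum_of_subset_of_nonneg hsub (fun T _ _ => pow_nonneg h0 _)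
    _ = ∏ i ∈ Finset.range N, (r ^ i + 1) := by
        rw [Finset.prod_add]
        apply Finset.sum_congr rfl
        intro T hT
        rw [Finset.prod_const_one, mul_one, Finset.prod_pow_eq_pow_sum]
        rfl
    _ ≤ ∏ i ∈ Finset.range N, Real.exp (r ^ i) := by
        apply Finset.prod_le_prod
        · intro i _; positivity
        · intro i _
          have := Real.add_one_le_exp (r ^ i)
          linarith
    _ = Real.exp (∑ i ∈ Finset.range N, r ^ i) := by rw [← Real.exp_sum]
    _ ≤ Real.exp (1 - r)⁻¹ := by
        apply Real.exp_le_exp.mpr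
        have hs : Summable (fun i : ℕ => r ^ i) := summable_geometric_of_lt_one h0 h1
        have := Summable.sum_le_tsum (Finset.range N) (fun i _ => pow_nonneg h0 i) hs
        rw [tsum_geometric_of_lt_one h0 h1] at this
        exact this

variable {q : ℂ}

/-- term of the expanded product -/
noncomputable def ff (q : ℂ) (S : Finset ℕ) : ℂ := ∏ i ∈ S, (-q ^ (i + 1))

/-- the signed weight function on finsets of positive naturals -/
noncomputable def Gf (q : ℂ) (T : Finset ℕ) : ℂ :=
  if 0 ∈ T then 0 else (-1) ^ T.card * q ^ (T.sum id)

lemma ff_eq (q : ℂ) (S : Finset ℕ) :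
    ff q S = (-1) ^ S.card * q ^ (S.sum id + S.card) := by
  rw [ff]
  calc ∏ i ∈ S, (-q ^ (i + 1)) = ∏ i ∈ S, ((-1) * q ^ (i + 1)) := by
        apply Finset.prod_congr rfl; intro i _; ring
    _ = ((-1) ^ S.card) * ∏ i ∈ S, q ^ (i + 1) := by
        rw [Finset.prod_mul_distrib, Finset.prod_const]
    _ = ((-1) ^ S.card) * q ^ (∑ i ∈ S, (i + 1)) := by rw [Finset.prod_pow_eq_pow_sum]
    _ = (-1) ^ S.card * q ^ (S.sum id + S.card) := by
        rw [Finset.sum_add_distrib, Finset.sum_const, smul_eq_mul, mul_one]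
        rfl

lemma norm_ff_le (hq : ‖q‖ < 1) (S : Finset ℕ) : ‖ff q S‖ ≤ ‖q‖ ^ (S.sum id) := by
  rw [ff_eq, norm_mul, norm_pow, norm_pow, norm_neg, norm_one, one_pow, one_mul]
  calc ‖q‖ ^ (S.sum id + S.card) ≤ ‖q‖ ^ (S.sum id) :=
    pow_le_pow_of_le_one (norm_nonneg q) (le_of_lt hq) (by omega)

lemma norm_Gf_le (hq : ‖q‖ < 1) (T : Finset ℕ) : ‖Gf q T‖ ≤ ‖q‖ ^ (T.sum id) := by
  rw [Gf]
  split_ifs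
  · simp only [norm_zero]
    positivity
  · rw [norm_mul, norm_pow, norm_pow, norm_neg, norm_one, one_pow, one_mul]

lemma summable_ff (hq : ‖q‖ < 1) : Summable (ff q) :=
  Summable.of_norm_bounded (summable_pow_sum (norm_nonneg q) hq) (norm_ff_le hq)

lemma summable_Gf (hq : ‖q‖ < 1) : Summable (Gf q) :=
  Summable.of_norm_bounded (summable_pow_sum (norm_nonneg q) hq) (norm_Gf_le hq)

/-- The infinite product expands into the sum over finsets. -/
lemma hasProd_one_sub (hq : ‖q‖ < 1) :
    HasProd (fun n : ℕ => 1 - q ^ (n + 1)) (∑' S : Finset ℕ, ff q S) := by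
  have hsum : HasSum (ff q) (∑' S : Finset ℕ, ff q S) := (summable_ff hq).hasSum
  have hpow : Filter.Tendsto (fun A : Finset ℕ => A.powerset) Filter.atTop Filter.atTop := by
    apply Filter.tendsto_atTop_finset_of_monotone
    · intro A B h
      exact Finset.powerset_mono.mpr h
    · intro T
      exact ⟨T, Finset.mem_powerset_self T⟩
  have hcomp := hsum.comp hpow
  rw [HasProd]
  apply hcomp.congr
  intro A
  simp only [Function.comp]
  rw [Finset.prod_congr rfl (fun i (_ : i ∈ A) => (by ring : (1 : ℂ) - q ^ (i+1) = -q^(i+1) + 1)),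
    Finset.prod_add]
  apply Finset.sum_congr rfl
  intro T hT
  rw [Finset.prod_const_one, mul_one]
  rfl


lemma Fr_props {T : Finset ℕ} (h0 : 0 ∉ T) (hnp : ¬ Pent T) :
    0 ∉ Fr T ∧ ¬ Pent (Fr T) ∧ Fr (Fr T) = T ∧ (Fr T).sum id = T.sum id ∧
      ((Fr T).card = T.card + 1 ∨ T.card = (Fr T).card + 1) := by
  have hne : T.Nonempty := by
    rcases Finset.eq_empty_or_nonempty T with h | h
    · exact absurd (Or.inl h) hnp
    · exact h
  rcases classify hne h0 hnp with ⟨S₀, m, M, H, rfl⟩ | ⟨S₀, m, M, H, rfl⟩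
  · rw [Fr_Pset H]
    refine ⟨zero_not_mem_Qset H, not_pent_Qset H, Fr_Qset H, (sum_Pset H).symm, ?_⟩
    right
    exact card_Pset H
  · rw [Fr_Qset H]
    refine ⟨zero_not_mem_Pset H, not_pent_Pset H, Fr_Pset H, sum_Pset H, ?_⟩
    left
    exact card_Pset H

lemma Gf_Fr {T : Finset ℕ} (hq : q ≠ 0) (h0 : 0 ∉ T) (hnp : ¬ Pent T) :
    Gf q (Fr T) = - Gf q T := by
  obtain ⟨h0', _, _, hsum, hcard⟩ := Fr_props h0 hnp
  rw [Gf, Gf, if_neg h0, if_neg h0', hsum]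
  rcases hcard with h | h <;> rw [h] <;> ring

/-- The set of "surviving" finsets. -/
def ASet : Set (Finset ℕ) := {T | 0 ∉ T ∧ ¬ Pent T}

/-- The involution on `ASet`. -/
def Finv : ASet → ASet := fun T =>
  ⟨Fr T.1, (Fr_props T.2.1 T.2.2).1, (Fr_props T.2.1 T.2.2).2.1⟩

def FinvEquiv : ASet ≃ ASet where
  toFun := Finv
  invFun := Finv
  left_inv := fun T => Subtype.ext (by
    show Fr (Fr T.1) = T.1
    exact (Fr_props T.2.1 T.2.2).2.2.1)
  right_inv := fun T => Subtype.ext (by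
    show Fr (Fr T.1) = T.1
    exact (Fr_props T.2.1 T.2.2).2.2.1)

lemma tsum_ASet_zero (hq : q ≠ 0) : ∑' T : ASet, Gf q T.1 = 0 := by
  have h1 : ∑' T : ASet, Gf q T.1 = ∑' T : ASet, Gf q (FinvEquiv T).1 :=
    (FinvEquiv.tsum_eq (fun T : ASet => Gf q T.1)).symm
  have h2 : ∑' T : ASet, Gf q (FinvEquiv T).1 = ∑' T : ASet, - Gf q T.1 :=
    tsum_congr (fun T => Gf_Fr hq T.2.1 T.2.2)
  rw [h2, tsum_neg] at h1
  linear_combination (1 / 2 : ℂ) * h1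

lemma tsum_compl_ASet (hq : ‖q‖ < 1) (hq0 : q ≠ 0) :
    ∑' T : (ASetᶜ : Set (Finset ℕ)), Gf q T.1 = ∑' j : ℤ, Gf q (pentFinset j) := by
  apply tsum_eq_tsum_of_ne_zero_bij
    (i := fun j => (⟨pentFinset j.1, by
      intro hA
      exact hA.2 ((pent_iff _).mpr ⟨j.1, rfl⟩)⟩ : (ASetᶜ : Set (Finset ℕ))))
  · intro a b hab
    apply Subtype.ext
    apply pentFinset_injective
    exact congrArg Subtype.val hab
  · rintro ⟨T, hT⟩ hTs
    simp only [Function.mem_support] at hTs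
    have h0T : 0 ∉ T := by
      intro h0
      rw [Gf, if_pos h0] at hTs
      exact hTs rfl
    have hpent : Pent T := by
      by_contra hc
      exact hT ⟨h0T, hc⟩
    obtain ⟨j, rfl⟩ := (pent_iff T).mp hpent
    refine ⟨⟨j, hTs⟩, rfl⟩
  · intro x
    rfl

/-- Master identity: the product expands to the pentagonal-number series. -/
theorem key_identity (hq : ‖q‖ < 1) (hq0 : q ≠ 0) :
    ∏' n : ℕ, (1 - q ^ (n + 1)) =
      ∑' j : ℤ, ((-1 : ℂ) ^ (j.natAbs) * q ^ ((pentFinset j).sum id)) := by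
  have h1 : ∏' n : ℕ, (1 - q ^ (n + 1)) = ∑' S : Finset ℕ, ff q S :=
    (hasProd_one_sub hq).tprod_eq
  have h2 : ∑' S : Finset ℕ, ff q S = ∑' T : Finset ℕ, Gf q T := by
    apply tsum_eq_tsum_of_ne_zero_bij (i := fun T => T.1.image (fun x => x - 1))
    · rintro ⟨T1, hT1⟩ ⟨T2, hT2⟩ hab
      simp only [Function.mem_support, Gf] at hT1 hT2
      have h01 : 0 ∉ T1 := fun h => hT1 (if_pos h)
      have h02 : 0 ∉ T2 := fun h => hT2 (if_pos h)
      apply Subtype.ext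
      have hback : ∀ T : Finset ℕ, 0 ∉ T → (T.image (fun x => x - 1)).image (fun x => x + 1) = T := by
        intro T h0T
        rw [Finset.image_image]
        have : ∀ x ∈ T, (fun x => x - 1 + 1) x = id x := by
          intro x hx
          have : x ≠ 0 := fun hxe => h0T (hxe ▸ hx)
          simp
          omega
        rw [Finset.image_congr (by intro x hx; exact this x hx), Finset.image_id]
      have hab' : T1.image (fun x => x - 1) = T2.image (fun x => x - 1) := hab
      show T1 = T2
      rw [← hback T1 h01, ← hback T2 h02, hab']
    · intro S hS
      have h0 : 0 ∉ S.image (fun x => x + 1) := by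
        simp
      have hmem : (S.image (fun x => x + 1)) ∈ Function.support (Gf q) := by
        rw [Function.mem_support, Gf, if_neg h0]
        apply mul_ne_zero
        · apply pow_ne_zero; norm_num
        · exact pow_ne_zero _ hq0
      refine ⟨⟨S.image (fun x => x + 1), hmem⟩, ?_⟩
      simp only
      rw [Finset.image_image]
      have : S.image (fun x => x + 1 - 1) = S := by
        have : (fun x => x + 1 - 1) = id := by funext x; simp
        rw [this, Finset.image_id]
      exact this
    · rintro ⟨T, hT⟩
      simp only [Function.mem_support, Gf] at hT
      have h0T : 0 ∉ T := fun h => hT (if_pos h)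
      simp only
      have hinj : Set.InjOn (fun x => x - 1) T := by
        intro a ha b hb hab
        have ha0 : a ≠ 0 := fun h => h0T (h ▸ ha)
        have hb0 : b ≠ 0 := fun h => h0T (h ▸ hb)
        simp only at hab
        omega
      rw [ff_eq, Gf, if_neg h0T, Finset.card_image_of_injOn hinj]
      congr 2
      rw [Finset.sum_image (fun a ha b hb hab => hinj ha hb hab)]
      have hkey : ∀ x ∈ T, id (x - 1) + 1 = id x := by
        intro x hx
        have : x ≠ 0 := fun h => h0T (h ▸ hx)
        simp only [id_eq]
        omega
      calc (∑ x ∈ T, id (x - 1)) + T.card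
          = ∑ x ∈ T, (id (x - 1) + 1) := by
            rw [Finset.sum_add_distrib, Finset.sum_const, smul_eq_mul, mul_one]
        _ = T.sum id := Finset.sum_congr rfl hkey
  have h3 : ∑' T : Finset ℕ, Gf q T =
      (∑' T : ASet, Gf q T.1) + ∑' T : (ASetᶜ : Set (Finset ℕ)), Gf q T.1 :=
    (Summable.tsum_subtype_add_tsum_subtype_compl (summable_Gf hq) ASet).symm
  rw [h1, h2, h3, tsum_ASet_zero hq0, zero_add, tsum_compl_ASet hq hq0]
  apply tsum_congr
  intro j
  rw [Gf, if_neg (zero_not_mem_pentFinset j), card_pentFinset]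



lemma neg_one_pow_natAbs (j : ℤ) : ((-1 : ℂ)) ^ (j.natAbs) = Complex.exp (π * I * j) := by
  rcases Int.even_or_odd j with ⟨k, hk⟩ | ⟨k, hk⟩
  · have he : Even j.natAbs := by
      rw [Int.natAbs_even]
      exact ⟨k, hk⟩
    rw [he.neg_one_pow, hk]
    push_cast
    have : (π : ℂ) * I * (k + k) = (k : ℂ) * (2 * π * I) := by push_cast; ring
    rw [this, Complex.exp_int_mul_two_pi_mul_I]
  · have ho : Odd j.natAbs := by
      rw [Int.natAbs_odd]
      exact ⟨k, hk⟩
    rw [ho.neg_one_pow, hk]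
    push_cast
    have : (π : ℂ) * I * (2 * k + 1) = (k : ℂ) * (2 * π * I) + π * I := by push_cast; ring
    rw [this, Complex.exp_add, Complex.exp_int_mul_two_pi_mul_I, one_mul, Complex.exp_pi_mul_I]

lemma norm_q_lt_one {τ : ℂ} (hτ : 0 < τ.im) : ‖Complex.exp (2 * π * I * τ)‖ < 1 := by
  rw [Complex.norm_exp]
  have hre : (2 * (π : ℂ) * I * τ).re = -(2 * π * τ.im) := by
    simp [Complex.mul_re, Complex.mul_im]
  rw [hre]
  apply Real.exp_lt_one_iff.mpr
  have := Real.pi_pos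
  nlinarith


end EtaAux

end EtaAuxSection

noncomputable def dedekindEta (τ : ℂ) : ℂ :=
  Complex.exp (π * I * τ / 12) * ∏' n : ℕ, (1 - Complex.exp (2 * π * I * (n + 1) * τ))

theorem eta_series (τ : ℂ) (hτ : 0 < τ.im) :
    dedekindEta τ = ∑' n : ℤ, Complex.exp (π * I * n) *
      Complex.exp (3 * π * I * ((n : ℂ) + 1 / 6) ^ 2 * τ) := by
  have hq : ‖Complex.exp (2 * π * I * τ)‖ < 1 := EtaAux.norm_q_lt_one hτ
  have hq0 : Complex.exp (2 * π * I * τ) ≠ 0 := Complex.exp_ne_zero _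
  rw [dedekindEta]
  have hfun : ∀ n : ℕ, 1 - Complex.exp (2 * π * I * (n + 1) * τ)
      = 1 - (Complex.exp (2 * π * I * τ)) ^ (n + 1) := by
    intro n
    congr 1
    rw [← Complex.exp_nat_mul]
    congr 1
    push_cast
    ring
  rw [tprod_congr hfun, EtaAux.key_identity hq hq0, ← tsum_mul_left]
  apply tsum_congr
  intro j
  set n : ℕ := (EtaAux.pentFinset j).sum id with hn
  have h2n : ((n : ℂ)) * 2 = 3 * (j : ℂ) ^ 2 + j := by
    have := EtaAux.sum_pentFinset j
    rw [← hn] at this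
    exact_mod_cast congrArg (Int.cast : ℤ → ℂ) this
  rw [EtaAux.neg_one_pow_natAbs]
  rw [show (Complex.exp (2 * π * I * τ)) ^ n = Complex.exp ((n : ℂ) * (2 * π * I * τ)) from
    (Complex.exp_nat_mul _ n).symm]
  rw [← Complex.exp_add, ← Complex.exp_add, ← Complex.exp_add]
  congr 1
  linear_combination (π : ℂ) * I * τ * h2n
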